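/- (Carlier's inequality) Let X be a real Hilbert space, let f : X → ℝ∪{+∞} be convex, lower semicontinuous, and proper, let x, x* ∈ X, and let γ > 0. Then f(x) + f*(x*) − ⟨x, x*⟩ ≥ ‖x − Prox_{γf}(x + γx*)‖²/γ. -/

import Mathlib

open scoped RealInnerProductSpace

/-- `f` is proper, convex and lower semicontinuous (values in ℝ ∪ {+∞}, encoded in `EReal`). -/
def IsProperConvexLsc {X : Type*} [NormedAddCommGroup X] [InnerProductSpace ℝ X]
    (f : X → EReal) : Prop :=
  (∀ z, f z ≠ ⊥) ∧ (∃ z, f z ≠ ⊤) ∧ LowerSemicontinuous f ∧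
  (∀ u v : X, ∀ a b : ℝ, 0 ≤ a → 0 ≤ b → a + b = 1 →
    f (a • u + b • v) ≤ (a : EReal) * f u + (b : EReal) * f v)

/-- The Fenchel conjugate of `f`. -/
noncomputable def conj {X : Type*} [NormedAddCommGroup X] [InnerProductSpace ℝ X]
    (f : X → EReal) (v : X) : EReal :=
  ⨆ z : X, (((⟪z, v⟫ : ℝ) : EReal) - f z)

/-- `P` is the proximal mapping of `γ f`: for every `z`, `P z` is
the unique minimizer over `y` of `f(y) + ‖y − z‖²/(2γ)`. -/
def IsProx {X : Type*} [NormedAddCommGroup X] [InnerProductSpace ℝ X]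
    (f : X → EReal) (γ : ℝ) (P : X → X) : Prop :=
  ∀ z, (∀ y, f (P z) + ((‖P z - z‖ ^ 2 / (2 * γ) : ℝ) : EReal)
              ≤ f y + ((‖y - z‖ ^ 2 / (2 * γ) : ℝ) : EReal)) ∧
    ∀ p, (∀ y, f p + ((‖p - z‖ ^ 2 / (2 * γ) : ℝ) : EReal)
              ≤ f y + ((‖y - z‖ ^ 2 / (2 * γ) : ℝ) : EReal)) → p = P z


private lemma prox_subgrad {X : Type*} [NormedAddCommGroup X] [InnerProductSpace ℝ X]
    (f : X → EReal) (hbot : ∀ z, f z ≠ ⊥)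
    (hconv : ∀ u v : X, ∀ a b : ℝ, 0 ≤ a → 0 ≤ b → a + b = 1 →
      f (a • u + b • v) ≤ (a : EReal) * f u + (b : EReal) * f v)
    (γ : ℝ) (hγ : 0 < γ) (w q : X)
    (hprox : ∀ y, f q + ((‖q - w‖ ^ 2 / (2 * γ) : ℝ) : EReal)
              ≤ f y + ((‖y - w‖ ^ 2 / (2 * γ) : ℝ) : EReal))
    (a : ℝ) (ha : f q = a) (y : X) :
    ((a + ⟪w - q, y - q⟫ / γ : ℝ) : EReal) ≤ f y := by
  rcases eq_or_ne (f y) ⊤ with hy | hy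
  · rw [hy]; exact le_top
  obtain ⟨b, hb⟩ : ∃ b : ℝ, f y = b := ⟨(f y).toReal, (EReal.coe_toReal hy (hbot y)).symm⟩
  rw [hb, EReal.coe_le_coe_iff]
  have h2γ : (0:ℝ) < 2 * γ := by linarith
  have hstep : ∀ t : ℝ, 0 < t → t ≤ 1 →
      a ≤ b + ⟪q - w, y - q⟫ / γ + t * ‖y - q‖ ^ 2 / (2 * γ) := by
    intro t ht ht1
    have hcv := hconv y q t (1 - t) ht.le (by linarith) (by ring)
    have hpr := hprox (t • y + (1 - t) • q)
    rw [ha, hb, ← EReal.coe_mul, ← EReal.coe_mul, ← EReal.coe_add] at hcv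
    have h3 : f q + ((‖q - w‖ ^ 2 / (2 * γ) : ℝ) : EReal)
        ≤ ((t * b + (1 - t) * a + ‖t • y + (1 - t) • q - w‖ ^ 2 / (2 * γ) : ℝ) : EReal) := by
      calc f q + ((‖q - w‖ ^ 2 / (2 * γ) : ℝ) : EReal)
          ≤ f (t • y + (1 - t) • q) + ((‖t • y + (1 - t) • q - w‖ ^ 2 / (2 * γ) : ℝ) : EReal) :=
            hpr
        _ ≤ ((t * b + (1 - t) * a : ℝ) : EReal)
              + ((‖t • y + (1 - t) • q - w‖ ^ 2 / (2 * γ) : ℝ) : EReal) :=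
            add_le_add_left hcv _
        _ = _ := by rw [← EReal.coe_add]
    rw [ha, ← EReal.coe_add, EReal.coe_le_coe_iff] at h3
    have hexp : ‖t • y + (1 - t) • q - w‖ ^ 2
        = ‖q - w‖ ^ 2 + 2 * t * ⟪q - w, y - q⟫ + t ^ 2 * ‖y - q‖ ^ 2 := by
      have h4 : t • y + (1 - t) • q - w = (q - w) + t • (y - q) := by
        rw [smul_sub, sub_smul, one_smul]; abel
      rw [h4, @norm_add_sq_real, real_inner_smul_right, norm_smul]
      simp [Real.norm_eq_abs, mul_pow, sq_abs]
      ring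
    rw [hexp, add_div, add_div] at h3
    have h6 : t * a ≤ t * b + 2 * t * ⟪q - w, y - q⟫ / (2 * γ) + t ^ 2 * ‖y - q‖ ^ 2 / (2 * γ) := by
      linarith
    have h7 : t * a ≤ t * (b + ⟪q - w, y - q⟫ / γ + t * ‖y - q‖ ^ 2 / (2 * γ)) := by
      have he : t * (b + ⟪q - w, y - q⟫ / γ + t * ‖y - q‖ ^ 2 / (2 * γ))
          = t * b + 2 * t * ⟪q - w, y - q⟫ / (2 * γ) + t ^ 2 * ‖y - q‖ ^ 2 / (2 * γ) := by
        field_simp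
      linarith
    exact (mul_le_mul_iff_right₀ ht).mp h7
  have hlim : a ≤ b + ⟪q - w, y - q⟫ / γ := by
    apply le_of_forall_pos_le_add
    intro ε hε
    set B := ‖y - q‖ ^ 2 / (2 * γ) with hB
    have hBnn : 0 ≤ B := by positivity
    set t := min 1 (ε / (B + 1)) with ht
    have ht0 : 0 < t := lt_min one_pos (by positivity)
    have h8 := hstep t ht0 (min_le_left _ _)
    have h9 : t * B ≤ ε := by
      have h10 : t ≤ ε / (B + 1) := min_le_right _ _
      have h11 : t * B ≤ (ε / (B + 1)) * B := mul_le_mul_of_nonneg_right h10 hBnn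
      have h12 : (ε / (B + 1)) * B ≤ ε := by
        rw [div_mul_eq_mul_div, div_le_iff₀ (by linarith)]
        nlinarith
      linarith
    have h13 : t * ‖y - q‖ ^ 2 / (2 * γ) = t * B := by rw [hB]; ring
    linarith
  have hinner : ⟪w - q, y - q⟫ = -⟪q - w, y - q⟫ := by
    rw [← inner_neg_left]; congr 1; abel
  rw [hinner, neg_div]
  linarith

theorem stmt_9 {X : Type*} [NormedAddCommGroup X] [InnerProductSpace ℝ X] [CompleteSpace X]
    (f : X → EReal) (hf : IsProperConvexLsc f) (x xs : X) (γ : ℝ) (hγ : 0 < γ)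
    (P : X → X) (hP : IsProx f γ P) :
    f x + conj f xs - ((⟪x, xs⟫ : ℝ) : EReal)
      ≥ ((‖x - P (x + γ • xs)‖ ^ 2 / γ : ℝ) : EReal) := by
  obtain ⟨hbot, ⟨z0, hz0⟩, hlsc, hconv⟩ := hf
  have hprox := (hP (x + γ • xs)).1
  obtain ⟨s0, hs0⟩ : ∃ s : ℝ, f z0 = s := ⟨(f z0).toReal, (EReal.coe_toReal hz0 (hbot z0)).symm⟩
  have hpt : f (P (x + γ • xs)) ≠ ⊤ := by
    intro h
    have h2 := hprox z0
    rw [h, hs0, EReal.top_add_coe, ← EReal.coe_add] at h2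
    exact EReal.coe_ne_top _ (top_le_iff.mp h2)
  obtain ⟨a, ha⟩ : ∃ a : ℝ, f (P (x + γ • xs)) = a :=
    ⟨(f _).toReal, (EReal.coe_toReal hpt (hbot _)).symm⟩
  have key := prox_subgrad f hbot hconv γ hγ (x + γ • xs) (P (x + γ • xs)) hprox a ha
  set p := P (x + γ • xs) with hpdef
  have hconjge : ((⟪p, xs⟫ - a : ℝ) : EReal) ≤ conj f xs := by
    have he : ((⟪p, xs⟫ : ℝ) : EReal) - f p = ((⟪p, xs⟫ - a : ℝ) : EReal) := by
      rw [ha, ← EReal.coe_sub]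
    rw [← he]
    exact le_iSup (fun w => ((⟪w, xs⟫ : ℝ) : EReal) - f w) p
  have hcne : conj f xs ≠ ⊥ := fun h => by
    rw [h] at hconjge; exact (EReal.coe_ne_bot _) (le_bot_iff.mp hconjge)
  rcases eq_or_ne (f x) ⊤ with hx | hx
  · rw [hx, EReal.top_add_of_ne_bot hcne, EReal.top_sub_coe]
    exact le_top
  obtain ⟨fx, hfx⟩ : ∃ r : ℝ, f x = r := ⟨(f x).toReal, (EReal.coe_toReal hx (hbot x)).symm⟩
  rcases eq_or_ne (conj f xs) ⊤ with hc | hc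
  · rw [hfx, hc, EReal.coe_add_top, EReal.top_sub_coe]
    exact le_top
  obtain ⟨c, hcc⟩ : ∃ r : ℝ, conj f xs = r := ⟨(conj f xs).toReal, (EReal.coe_toReal hc hcne).symm⟩
  rw [hfx, hcc, ← EReal.coe_add, ← EReal.coe_sub, ge_iff_le, EReal.coe_le_coe_iff]
  have h1 : a + ⟪x + γ • xs - p, x - p⟫ / γ ≤ fx := by
    have h := key x; rw [hfx, EReal.coe_le_coe_iff] at h; exact h
  have h2 : ⟪p, xs⟫ - a ≤ c := by
    rw [hcc, EReal.coe_le_coe_iff] at hconjge; exact hconjge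
  have h3 : ⟪x + γ • xs - p, x - p⟫ = ‖x - p‖ ^ 2 + γ * ⟪xs, x - p⟫ := by
    have e : x + γ • xs - p = (x - p) + γ • xs := by abel
    rw [e, inner_add_left, real_inner_smul_left, real_inner_self_eq_norm_sq]
  have h4 : ⟪p, xs⟫ - ⟪x, xs⟫ = -⟪xs, x - p⟫ := by
    rw [inner_sub_right, real_inner_comm p xs, real_inner_comm x xs]; ring
  have e2 : (‖x - p‖ ^ 2 + γ * ⟪xs, x - p⟫) / γ = ‖x - p‖ ^ 2 / γ + ⟪xs, x - p⟫ := by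
    field_simp
  rw [h3, e2] at h1
  linarith
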